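/- Let G be a graph with n vertices and maximum degree at most d. For every nonempty subset U ⊆ V(G) and every natural number i, the ball B(U,i) of all vertices at distance at most i from U has size at least min(n/2, |U|·(1 + h(G)/d)^i). -/

import Mathlib

open Finset
open scoped Classical

/-- Number of edges of `G` between disjoint sets `A` and `B`. -/
noncomputable def eBetween {V : Type*} (G : SimpleGraph V) (A B : Finset V) : ℕ :=
  ((A ×ˢ B).filter fun p => G.Adj p.1 p.2).card

/-- The Cheeger constant `h(G) = min{e(S, V\S)/|S| : 0 < |S| ≤ n/2}`. -/
noncomputable def cheeger {V : Type*} [Fintype V] (G : SimpleGraph V) : ℝ :=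
  sInf {x : ℝ | ∃ S : Finset V, S.Nonempty ∧ 2 * S.card ≤ Fintype.card V ∧
    x = (eBetween G S Sᶜ : ℝ) / S.card}

/-- `B(U,i)`: the set of vertices at distance at most `i` from some vertex of `U`. -/
noncomputable def ball {V : Type*} [Fintype V] (G : SimpleGraph V)
    (U : Finset V) (i : ℕ) : Finset V :=
  univ.filter fun v => ∃ u ∈ U, ∃ p : G.Walk u v, p.length ≤ i

lemma subset_ball {V : Type*} [Fintype V] (G : SimpleGraph V) (U : Finset V) (i : ℕ) :
    U ⊆ ball G U i := by
  intro v hv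
  simp only [ball, mem_filter, mem_univ, true_and]
  exact ⟨v, hv, SimpleGraph.Walk.nil, by simp⟩

lemma ball_mono_succ {V : Type*} [Fintype V] (G : SimpleGraph V) (U : Finset V) (i : ℕ) :
    ball G U i ⊆ ball G U (i + 1) := by
  intro v hv
  simp only [ball, mem_filter, mem_univ, true_and] at hv ⊢
  obtain ⟨u, hu, p, hp⟩ := hv
  exact ⟨u, hu, p, hp.trans (Nat.le_succ i)⟩

lemma adj_mem_ball_succ {V : Type*} [Fintype V] (G : SimpleGraph V) (U : Finset V) (i : ℕ)
    {a b : V} (ha : a ∈ ball G U i) (hab : G.Adj a b) : b ∈ ball G U (i + 1) := by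
  simp only [ball, mem_filter, mem_univ, true_and] at ha ⊢
  obtain ⟨u, hu, p, hp⟩ := ha
  exact ⟨u, hu, p.concat hab, by
    rw [SimpleGraph.Walk.length_concat]; omega⟩

lemma cheeger_nonneg {V : Type*} [Fintype V] (G : SimpleGraph V) : 0 ≤ cheeger G := by
  apply Real.sInf_nonneg
  rintro x ⟨S, hS, hScard, rfl⟩
  positivity

lemma cheeger_le {V : Type*} [Fintype V] (G : SimpleGraph V) {S : Finset V}
    (hS : S.Nonempty) (hScard : 2 * S.card ≤ Fintype.card V) :
    cheeger G ≤ (eBetween G S Sᶜ : ℝ) / S.card := by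
  apply csInf_le
  · exact ⟨0, by rintro x ⟨T, hT, hTcard, rfl⟩; positivity⟩
  · exact ⟨S, hS, hScard, rfl⟩

lemma eBetween_le_mul {V : Type*} [Fintype V] (G : SimpleGraph V) (d : ℕ)
    (hdeg : ∀ v : V, G.degree v ≤ d) (U : Finset V) (i : ℕ) :
    eBetween G (ball G U i) (ball G U i)ᶜ ≤
      d * ((ball G U (i + 1)) \ (ball G U i)).card := by
  set S := ball G U i
  apply card_le_mul_card_image_of_maps_to (f := Prod.snd)
    (t := (ball G U (i + 1)) \ S)
  · rintro ⟨a, b⟩ hab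
    simp only [mem_filter, mem_product, mem_compl] at hab
    exact mem_sdiff.2 ⟨adj_mem_ball_succ G U i hab.1.1 hab.2, hab.1.2⟩
  · intro b hb
    calc #{p ∈ (S ×ˢ Sᶜ).filter fun p => G.Adj p.1 p.2 | p.2 = b}
        ≤ (G.neighborFinset b).card := by
          apply card_le_card_of_injOn Prod.fst
          · rintro ⟨a, b'⟩ hp
            simp only [mem_coe, mem_filter, mem_product] at hp
            simp only [mem_coe, SimpleGraph.mem_neighborFinset]
            exact (hp.2 ▸ hp.1.2).symm
          · rintro ⟨a, b1⟩ hp1 ⟨a', b2⟩ hp2 h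
            simp only [mem_coe, mem_filter] at hp1 hp2
            simp only at h
            rw [Prod.ext_iff]
            exact ⟨h, hp1.2.trans hp2.2.symm⟩
      _ ≤ d := hdeg b

/-- For a graph on `n` vertices with maximum degree at most `d`, every nonempty
`U` and every `i` satisfy `|B(U,i)| ≥ min(n/2, |U|(1 + h(G)/d)^i)`. -/
theorem stmt_2 {V : Type*} [Fintype V] (G : SimpleGraph V) (d : ℕ) (hd : 0 < d)
    (hdeg : ∀ v : V, G.degree v ≤ d) (U : Finset V) (hU : U.Nonempty) (i : ℕ) :
    min ((Fintype.card V : ℝ) / 2) ((U.card : ℝ) * (1 + cheeger G / d) ^ i) ≤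
      ((ball G U i).card : ℝ) := by
  have hc0 : (0:ℝ) ≤ cheeger G := cheeger_nonneg G
  have hd' : (0:ℝ) < d := by exact_mod_cast hd
  have hc1 : (1:ℝ) ≤ 1 + cheeger G / d := by
    have : 0 ≤ cheeger G / d := div_nonneg hc0 hd'.le
    linarith
  induction i with
  | zero =>
    refine le_trans (min_le_right _ _) ?_
    simp only [pow_zero, mul_one]
    exact_mod_cast card_le_card (subset_ball G U 0)
  | succ i ih =>
    set S := ball G U i with hSdef
    have hSne : S.Nonempty := hU.mono (subset_ball G U i)
    have hmono : (S.card : ℝ) ≤ ((ball G U (i+1)).card : ℝ) := by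
      exact_mod_cast card_le_card (ball_mono_succ G U i)
    by_cases hhalf : 2 * S.card ≤ Fintype.card V
    · -- small case
      have hch : cheeger G ≤ (eBetween G S Sᶜ : ℝ) / S.card := cheeger_le G hSne hhalf
      have hSpos : (0:ℝ) < S.card := by exact_mod_cast hSne.card_pos
      have he : cheeger G * S.card ≤ (eBetween G S Sᶜ : ℝ) := by
        have := mul_le_mul_of_nonneg_right hch hSpos.le
        rwa [div_mul_cancel₀ _ hSpos.ne'] at this
      have hdiff : (eBetween G S Sᶜ : ℝ) ≤ d * (((ball G U (i+1)) \ S).card : ℝ) := by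
        exact_mod_cast eBetween_le_mul G d hdeg U i
      have hcardsplit : (S.card : ℝ) + (((ball G U (i+1)) \ S).card : ℝ)
          ≤ ((ball G U (i+1)).card : ℝ) := by
        have h := card_sdiff_add_card_eq_card (ball_mono_succ G U i)
        have h2 : (ball G U i).card + ((ball G U (i+1)) \ (ball G U i)).card
            ≤ (ball G U (i+1)).card := by omega
        rw [hSdef]
        exact_mod_cast h2
      have key : (S.card : ℝ) * (1 + cheeger G / d) ≤ ((ball G U (i+1)).card : ℝ) := by
        have h1 : (S.card : ℝ) * (1 + cheeger G / d)
            = S.card + (cheeger G * S.card) / d := by ring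
        have h2 : (cheeger G * S.card) / d ≤ (((ball G U (i+1)) \ S).card : ℝ) := by
          rw [div_le_iff₀ hd']
          calc cheeger G * S.card ≤ (eBetween G S Sᶜ : ℝ) := he
            _ ≤ d * (((ball G U (i+1)) \ S).card : ℝ) := hdiff
            _ = (((ball G U (i+1)) \ S).card : ℝ) * d := mul_comm _ _
        linarith
      rcases le_total ((Fintype.card V : ℝ) / 2) ((U.card : ℝ) * (1 + cheeger G / d) ^ i)
          with hmin | hmin
      · have : (Fintype.card V : ℝ) / 2 ≤ (S.card : ℝ) := by have := ih; rwa [min_eq_left hmin] at this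
        exact le_trans (min_le_left _ _) (this.trans hmono)
      · have hIH : (U.card : ℝ) * (1 + cheeger G / d) ^ i ≤ S.card := by
          have := ih
          rwa [min_eq_right hmin] at this
        refine le_trans (min_le_right _ _) ?_
        calc (U.card : ℝ) * (1 + cheeger G / d) ^ (i + 1)
            = ((U.card : ℝ) * (1 + cheeger G / d) ^ i) * (1 + cheeger G / d) := by ring
          _ ≤ (S.card : ℝ) * (1 + cheeger G / d) := by
              exact mul_le_mul_of_nonneg_right hIH (by linarith)
          _ ≤ ((ball G U (i+1)).card : ℝ) := key
    · -- big case
      have : (Fintype.card V : ℝ) / 2 ≤ (S.card : ℝ) := by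
        push_neg at hhalf
        have : (Fintype.card V : ℝ) < 2 * S.card := by exact_mod_cast hhalf
        linarith
      exact le_trans (min_le_left _ _) (this.trans hmono)
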